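/- Let g ≥ 2 and d be integers and let (g₁, g₂, k) be a stable vine curve of genus g. Then (g₁, g₂, k) is d-special if and only if (2g − 2)/gcd(d − g + 1, 2g − 2) divides w₁ = 2g₁ − 2 + k. -/

import Mathlib

/-- `(g₁, g₂, k)` encodes a stable vine curve of genus `g`: two smooth irreducible
components of genera `g₁, g₂` meeting in `k` nodes. -/
def StableVine (g g₁ g₂ k : ℤ) : Prop :=
  0 ≤ g₁ ∧ 0 ≤ g₂ ∧ 1 ≤ k ∧ g = g₁ + g₂ + k - 1 ∧ ((g₁ = 0 ∨ g₂ = 0) → 3 ≤ k)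

/-- The Basic Inequality for a component of `ω`-degree `w`, with `k` nodes, on a curve of
genus `g`, for total degree `d` and partial degree `e`. -/
def BasicIneq (g d k w e : ℤ) : Prop :=
  (d : ℚ) * w / (2 * g - 2) - k / 2 ≤ e ∧ (e : ℚ) ≤ (d : ℚ) * w / (2 * g - 2) + k / 2

/-- The strict version of the Basic Inequality. -/
def BasicIneqStrict (g d k w e : ℤ) : Prop :=
  (d : ℚ) * w / (2 * g - 2) - k / 2 < e ∧ (e : ℚ) < (d : ℚ) * w / (2 * g - 2) + k / 2

/-- `(e₁, e₂)` is a balanced multidegree of total degree `d` on the vine curve `(g₁, g₂, k)`. -/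
def IsBalanced (g d g₁ g₂ k e₁ e₂ : ℤ) : Prop :=
  e₁ + e₂ = d ∧ BasicIneq g d k (2 * g₁ - 2 + k) e₁ ∧ BasicIneq g d k (2 * g₂ - 2 + k) e₂

/-- `(e₁, e₂)` is a stably balanced multidegree of total degree `d` on `(g₁, g₂, k)`. -/
def IsStablyBalanced (g d g₁ g₂ k e₁ e₂ : ℤ) : Prop :=
  e₁ + e₂ = d ∧ BasicIneqStrict g d k (2 * g₁ - 2 + k) e₁ ∧
    BasicIneqStrict g d k (2 * g₂ - 2 + k) e₂

/-- The vine curve `(g₁, g₂, k)` is `d`-special: it admits a balanced multidegree of total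
degree `d` which is not stably balanced. -/
def DSpecial (g d g₁ g₂ k : ℤ) : Prop :=
  ∃ e₁ e₂ : ℤ, IsBalanced g d g₁ g₂ k e₁ e₂ ∧ ¬ IsStablyBalanced g d g₁ g₂ k e₁ e₂

lemma basicIneq_iff (g d k w e : ℤ) (hg : 2 ≤ g) :
    BasicIneq g d k w e ↔
      2*d*w - k*(2*g-2) ≤ 2*(2*g-2)*e ∧ 2*(2*g-2)*e ≤ 2*d*w + k*(2*g-2) := by
  have hn : (0:ℚ) < 2*(g:ℚ) - 2 := by
    have : (2:ℚ) ≤ g := by exact_mod_cast hg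
    linarith
  have heq : (d:ℚ)*w/(2*(g:ℚ)-2) * (2*(g:ℚ)-2) = (d:ℚ)*w := div_mul_cancel₀ _ hn.ne'
  unfold BasicIneq
  constructor
  · rintro ⟨h1, h2⟩
    constructor
    · have h' : (2:ℚ)*d*w - k*(2*g-2) ≤ 2*(2*g-2)*e := by nlinarith
      exact_mod_cast h'
    · have h' : (2:ℚ)*(2*g-2)*e ≤ 2*d*w + k*(2*g-2) := by nlinarith
      exact_mod_cast h'
  · rintro ⟨h1, h2⟩
    have h1' : (2:ℚ)*d*w - k*(2*g-2) ≤ 2*(2*g-2)*e := by exact_mod_cast h1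
    have h2' : (2:ℚ)*(2*g-2)*e ≤ 2*d*w + k*(2*g-2) := by exact_mod_cast h2
    constructor
    · rw [sub_le_iff_le_add, div_le_iff₀ hn]; linarith
    · rw [← sub_le_iff_le_add, le_div_iff₀ hn]; linarith

lemma basicIneqStrict_iff (g d k w e : ℤ) (hg : 2 ≤ g) :
    BasicIneqStrict g d k w e ↔
      2*d*w - k*(2*g-2) < 2*(2*g-2)*e ∧ 2*(2*g-2)*e < 2*d*w + k*(2*g-2) := by
  have hn : (0:ℚ) < 2*(g:ℚ) - 2 := by
    have : (2:ℚ) ≤ g := by exact_mod_cast hg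
    linarith
  have heq : (d:ℚ)*w/(2*(g:ℚ)-2) * (2*(g:ℚ)-2) = (d:ℚ)*w := div_mul_cancel₀ _ hn.ne'
  unfold BasicIneqStrict
  constructor
  · rintro ⟨h1, h2⟩
    constructor
    · have h' : (2:ℚ)*d*w - k*(2*g-2) < 2*(2*g-2)*e := by nlinarith
      exact_mod_cast h'
    · have h' : (2:ℚ)*(2*g-2)*e < 2*d*w + k*(2*g-2) := by nlinarith
      exact_mod_cast h'
  · rintro ⟨h1, h2⟩
    have h1' : (2:ℚ)*d*w - k*(2*g-2) < 2*(2*g-2)*e := by exact_mod_cast h1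
    have h2' : (2:ℚ)*(2*g-2)*e < 2*d*w + k*(2*g-2) := by exact_mod_cast h2
    constructor
    · rw [sub_lt_iff_lt_add, div_lt_iff₀ hn]; linarith
    · rw [← sub_lt_iff_lt_add, lt_div_iff₀ hn]; linarith

/-- Remark 2.7 (vine-curve form): a stable vine curve is `d`-special iff
`(2g-2)/gcd(d-g+1, 2g-2)` divides `w₁ = 2g₁ - 2 + k`. -/
theorem stmt_5 (g d : ℤ) (hg : 2 ≤ g) (g₁ g₂ k : ℤ) (hvine : StableVine g g₁ g₂ k) :
    DSpecial g d g₁ g₂ k ↔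
      (2 * g - 2) / (Int.gcd (d - g + 1) (2 * g - 2) : ℤ) ∣ 2 * g₁ - 2 + k := by
  obtain ⟨hg1, hg2, hk, hgsum, -⟩ := hvine
  have hnpos : (0:ℤ) < 2*g - 2 := by linarith
  have hkn : (0:ℤ) ≤ k*(2*g-2) := mul_nonneg (by linarith) (by linarith)
  -- Step A : DSpecial ↔ 2*(2g-2) ∣ 2*d*w₁ + k*(2g-2)
  have stepA : DSpecial g d g₁ g₂ k ↔
      2*(2*g-2) ∣ 2*d*(2*g₁-2+k) + k*(2*g-2) := by
    constructor
    · rintro ⟨e₁, e₂, ⟨hsum, hb1, hb2⟩, hnsb⟩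
      rw [basicIneq_iff _ _ _ _ _ hg] at hb1 hb2
      have hw2 : (2*g₂-2+k) = (2*g-2) - (2*g₁-2+k) := by linarith
      rw [hw2] at hb2
      have hcase : 2*(2*g-2)*e₁ = 2*d*(2*g₁-2+k) - k*(2*g-2) ∨
          2*(2*g-2)*e₁ = 2*d*(2*g₁-2+k) + k*(2*g-2) := by
        by_contra hc
        push_neg at hc
        apply hnsb
        refine ⟨hsum, ?_, ?_⟩ <;> rw [basicIneqStrict_iff _ _ _ _ _ hg]
        · exact ⟨lt_of_le_of_ne hb1.1 (fun h => hc.1 h.symm),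
            lt_of_le_of_ne hb1.2 hc.2⟩
        · rw [hw2]
          constructor
          · rcases lt_or_eq_of_le hb2.1 with h | h
            · exact h
            · exfalso; apply hc.2; nlinarith [hsum]
          · rcases lt_or_eq_of_le hb2.2 with h | h
            · exact h
            · exfalso; apply hc.1; nlinarith [hsum]
      rcases hcase with h | h
      · exact ⟨e₁ + k, by linarith⟩
      · exact ⟨e₁, by linarith⟩
    · rintro ⟨c, hc⟩
      refine ⟨c, d - c, ⟨by ring, ?_, ?_⟩, ?_⟩
      · rw [basicIneq_iff _ _ _ _ _ hg]
        constructor <;> linarith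
      · rw [basicIneq_iff _ _ _ _ _ hg]
        have hw2 : (2*g₂-2+k) = (2*g-2) - (2*g₁-2+k) := by linarith
        rw [hw2]
        constructor <;> nlinarith [hc, hkn]
      · rintro ⟨-, hs1, -⟩
        rw [basicIneqStrict_iff _ _ _ _ _ hg] at hs1
        have := hs1.2
        linarith
  rw [stepA]
  -- Step B : arithmetic with gcd
  have hgcdne : Int.gcd (d-g+1) (2*g-2) ≠ 0 := by
    intro h
    have h2 : 2*g-2 = 0 := (Int.gcd_eq_zero_iff.mp h).2
    omega
  have hG : (0:ℤ) < (Int.gcd (d-g+1) (2*g-2) : ℤ) := by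
    exact_mod_cast Nat.pos_of_ne_zero hgcdne
  obtain ⟨n', hn'⟩ : ((Int.gcd (d-g+1) (2*g-2) : ℤ)) ∣ (2*g-2) := Int.gcd_dvd_right _ _
  obtain ⟨a', ha'⟩ : ((Int.gcd (d-g+1) (2*g-2) : ℤ)) ∣ (d-g+1) := Int.gcd_dvd_left _ _
  have hndiv : (2*g-2) / (Int.gcd (d-g+1) (2*g-2) : ℤ) = n' := by
    have h := Int.mul_ediv_cancel_left n' hG.ne'
    rwa [← hn'] at h
  have hadiv : (d-g+1) / (Int.gcd (d-g+1) (2*g-2) : ℤ) = a' := by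
    have h := Int.mul_ediv_cancel_left a' hG.ne'
    rwa [← ha'] at h
  have hcop : IsCoprime n' a' := by
    rw [Int.isCoprime_iff_gcd_eq_one, Int.gcd_comm]
    have h1 := Int.gcd_div_gcd_div_gcd (i := d-g+1) (j := 2*g-2)
      (Nat.pos_of_ne_zero hgcdne)
    rwa [hndiv, hadiv] at h1
  rw [hndiv]
  have key : 2*d*(2*g₁-2+k) + k*(2*g-2)
      = 2*((2*g₁-2+k)*(d-g+1) + (g₁+k-1)*(2*g-2)) := by
    have hgg : g = g₁ + g₂ + k - 1 := hgsum
    rw [hgg]; ring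
  rw [key, mul_dvd_mul_iff_left (two_ne_zero (α := ℤ)),
    dvd_add_left (dvd_mul_left (2*g-2) (g₁+k-1))]
  constructor
  · intro h
    obtain ⟨c, hc⟩ := h
    have hGa : (Int.gcd (d-g+1) (2*g-2) : ℤ) * ((2*g₁-2+k) * a')
        = (Int.gcd (d-g+1) (2*g-2) : ℤ) * (n' * c) := by
      linear_combination hc - (2*g₁-2+k)*ha' + c*hn'
    have h2 : (2*g₁-2+k) * a' = n' * c := mul_left_cancel₀ hG.ne' hGa
    exact hcop.dvd_of_dvd_mul_right ⟨c, h2⟩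
  · intro h
    obtain ⟨c, hc⟩ := h
    refine ⟨c * a', ?_⟩
    linear_combination (d-g+1)*hc + (n'*c)*ha' - (c*a')*hn'
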